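/- Let G be a finite 2-group of order 2^n with n ≥ 3, and let p be an odd prime. Then the sign of the permutation g ↦ g^p of G equals (-1/p)^{G(4)/2}, where G(4) is the number of elements of order 4 in G and (-1/p) is the Legendre symbol. -/

import Mathlib

open Equiv Equiv.Perm Finset Subgroup

/-! ### Auxiliary lemmas -/

lemma aux_sigmaCongrRight_mulSingle_swap {ι : Type*} [DecidableEq ι]
    (β : ι → Type*) [∀ i, DecidableEq (β i)] (i : ι) (a b : β i) :
    Equiv.Perm.sigmaCongrRight (Pi.mulSingle i (Equiv.swap a b)) =
      Equiv.swap (⟨i, a⟩ : Σ j, β j) ⟨i, b⟩ := by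
  apply Equiv.ext
  rintro ⟨j, x⟩
  rcases eq_or_ne j i with rfl | hj
  · simp only [Equiv.sigmaCongrRight_apply, Pi.mulSingle_eq_same]
    rcases eq_or_ne x a with rfl | hxa
    · simp
    · rcases eq_or_ne x b with rfl | hxb
      · simp
      · rw [swap_apply_of_ne_of_ne hxa hxb,
          swap_apply_of_ne_of_ne (fun h => hxa (by simpa using h))
            (fun h => hxb (by simpa using h))]
  · rw [Equiv.sigmaCongrRight_apply, Pi.mulSingle_eq_of_ne hj, Perm.one_apply,
      swap_apply_of_ne_of_ne (fun h => hj (congrArg Sigma.fst h))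
        (fun h => hj (congrArg Sigma.fst h))]

lemma aux_sign_sigmaCongrRight_mulSingle {ι : Type*} [Fintype ι] [DecidableEq ι]
    (β : ι → Type*) [∀ i, Fintype (β i)] [∀ i, DecidableEq (β i)]
    (i : ι) (τ : Perm (β i)) :
    Perm.sign (Perm.sigmaCongrRight (Pi.mulSingle i τ)) = Perm.sign τ := by
  refine Equiv.Perm.swap_induction_on
    (motive := fun σ => Perm.sign (Perm.sigmaCongrRight (Pi.mulSingle i σ)) = Perm.sign σ)
    τ ?_ ?_
  · show Perm.sign (Perm.sigmaCongrRight (Pi.mulSingle i (1 : Perm (β i)))) = _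
    rw [Pi.mulSingle_one]; simp
  · intro τ x y hxy ih
    have hdec : (Pi.mulSingle i (Equiv.swap x y * τ) : ∀ j, Perm (β j)) =
        Pi.mulSingle i (Equiv.swap x y) * Pi.mulSingle i τ := by
      rw [← Pi.mulSingle_mul]
    rw [hdec, ← Equiv.Perm.sigmaCongrRight_mul, map_mul, ih, map_mul,
      aux_sigmaCongrRight_mulSingle_swap, Perm.sign_swap (by simp [hxy]),
      Perm.sign_swap hxy]

lemma aux_sign_sigmaCongrRight {ι : Type*} [Fintype ι] [DecidableEq ι]
    (β : ι → Type*) [∀ i, Fintype (β i)] [∀ i, DecidableEq (β i)]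
    (F : ∀ i, Perm (β i)) :
    Perm.sign (Perm.sigmaCongrRight F) = ∏ i, Perm.sign (F i) := by
  have main : ∀ s : Finset ι, ∀ F : ∀ i, Perm (β i), (∀ i, i ∉ s → F i = 1) →
      Perm.sign (Perm.sigmaCongrRight F) = ∏ i ∈ s, Perm.sign (F i) := by
    intro s
    induction s using Finset.induction with
    | empty =>
      intro F hF
      have : F = 1 := funext fun i => hF i (by simp)
      rw [this]
      simp
    | @insert a s ha ih =>
      intro F hF
      have hupd : ∀ i, i ∉ s → Function.update F a 1 i = 1 := fun i hi => by
        rcases eq_or_ne i a with rfl | h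
        · simp
        · rw [Function.update_of_ne h]
          exact hF i (by simp [hi, h])
      have hdecomp : F = Pi.mulSingle a (F a) * Function.update F a 1 := by
        funext i
        rcases eq_or_ne i a with rfl | hi
        · simp
        · simp [Pi.mulSingle_eq_of_ne hi, Function.update_of_ne hi]
      calc Perm.sign (Perm.sigmaCongrRight F)
          = Perm.sign (Perm.sigmaCongrRight (Pi.mulSingle a (F a))) *
            Perm.sign (Perm.sigmaCongrRight (Function.update F a 1)) := by
            rw [← map_mul, Equiv.Perm.sigmaCongrRight_mul, ← hdecomp]
        _ = Perm.sign (F a) * ∏ i ∈ s, Perm.sign (Function.update F a 1 i) := by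
            rw [aux_sign_sigmaCongrRight_mulSingle, ih _ hupd]
        _ = ∏ i ∈ insert a s, Perm.sign (F i) := by
            rw [Finset.prod_insert ha]
            congr 1
            apply Finset.prod_congr rfl
            intro i hi
            rw [Function.update_of_ne (fun h : i = a => ha (h ▸ hi))]
  rw [main Finset.univ F (by simp)]

lemma aux_sign_fiberwise {α ι : Type*} [Fintype α] [DecidableEq α] [Fintype ι] [DecidableEq ι]
    (f : α → ι) (σ : Perm α) (hf : ∀ a, f (σ a) = f a) :
    Perm.sign σ = ∏ i, Perm.sign (σ.subtypePerm (fun a => by rw [hf a]) :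
      Perm {a // f a = i}) := by
  rw [← aux_sign_sigmaCongrRight]
  refine Equiv.Perm.sign_eq_sign_of_equiv _ _ (Equiv.sigmaFiberEquiv f).symm ?_
  intro x
  apply Sigma.subtype_ext
  · exact hf x
  · rfl

lemma aux_sign_of_uniform_period {β : Type*} [Fintype β] [DecidableEq β] (τ : Equiv.Perm β)
    (o : ℕ) (ho : 0 < o)
    (h : ∀ (x : β) (j : ℕ), (τ ^ j) x = x ↔ o ∣ j) :
    Perm.sign τ = ((-1 : ℤˣ) ^ (o - 1)) ^ (Fintype.card β / o) := by
  rcases eq_or_lt_of_le (show 1 ≤ o from ho) with h1 | ho2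
  · have : τ = 1 := by
      apply Equiv.ext
      intro x
      simpa using (h x 1).2 (h1 ▸ dvd_refl 1)
    rw [this, ← h1]
    simp
  · have hfix : τ.support = Finset.univ := by
      apply Finset.eq_univ_iff_forall.2
      intro x
      rw [Equiv.Perm.mem_support]
      intro hx
      have := (h x 1).1 (by simpa using hx)
      exact absurd (Nat.le_of_dvd one_pos this) (by omega)
    have key : ∀ c ∈ τ.cycleType, c = o := by
      intro c hc
      rw [Equiv.Perm.cycleType_def, Multiset.mem_map] at hc
      obtain ⟨c', hc', rfl⟩ := hc
      have hc'' : c' ∈ τ.cycleFactorsFinset := hc'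
      obtain ⟨hcyc, hsupp⟩ := Equiv.Perm.mem_cycleFactorsFinset_iff.1 hc''
      obtain ⟨x, hx, -⟩ := id hcyc
      have hxs : x ∈ c'.support := Equiv.Perm.mem_support.2 hx
      have hpow : ∀ j : ℕ, (c' ^ j) x = (τ ^ j) x := by
        intro j
        induction j with
        | zero => simp
        | succ j ih =>
          have hmem : (τ ^ j) x ∈ c'.support := by
            rw [← ih]
            exact (Equiv.Perm.pow_apply_mem_support).2 hxs
          rw [pow_succ', pow_succ', Equiv.Perm.mul_apply, Equiv.Perm.mul_apply, ih,
            hsupp _ hmem]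
      have hdvd : ∀ j : ℕ, c'.support.card ∣ j ↔ o ∣ j := by
        intro j
        rw [← h x j, ← hpow j, ← hcyc.orderOf, orderOf_dvd_iff_pow_eq_one]
        exact hcyc.pow_eq_one_iff' hx
      exact (Nat.dvd_antisymm ((hdvd o).2 dvd_rfl) ((hdvd _).1 dvd_rfl))
    have hrep : τ.cycleType = Multiset.replicate (Multiset.card τ.cycleType) o :=
      Multiset.eq_replicate_card.2 key
    have hsum : τ.cycleType.sum = Fintype.card β := by
      rw [Equiv.Perm.sum_cycleType, hfix, Finset.card_univ]
    have hsum2 : Multiset.card τ.cycleType * o = Fintype.card β := by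
      have h2 := hsum
      rw [hrep, Multiset.sum_replicate, smul_eq_mul] at h2
      exact h2
    have hm : Multiset.card τ.cycleType = Fintype.card β / o :=
      (Nat.div_eq_of_eq_mul_left ho hsum2.symm).symm
    rw [Equiv.Perm.sign_of_cycleType, hsum, hrep, Multiset.card_replicate, hm]
    set m := Fintype.card β / o with hmdef
    have hβ : Fintype.card β = m * o := by rw [← hm]; exact hsum2.symm
    rw [hβ]
    have harith : m * o + m = (o - 1 + 2) * m := by
      have : o - 1 + 2 = o + 1 := by omega
      rw [this]
      ring
    rw [harith, pow_mul]
    congr 1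
    rw [pow_add]
    norm_num

lemma aux_odd_pow_int (m : ℕ) (x : ℤ) (hx : Odd x) :
    (2 : ℤ) ^ (m + 3) ∣ x ^ (2 ^ (m + 1)) - 1 := by
  induction m with
  | zero =>
    obtain ⟨t, rfl⟩ := hx
    obtain ⟨s, hs⟩ := Int.even_mul_succ_self t
    exact ⟨s, by rw [show ((2*t+1)^(2^(0+1)) - 1 : ℤ) = 4 * (t*(t+1)) by ring, hs]; ring⟩
  | succ m ih =>
    have hy : Odd (x ^ (2 ^ (m + 1))) := hx.pow
    obtain ⟨u, hu⟩ := hy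
    have hsq : x ^ (2 ^ (m + 2)) - 1
        = (x ^ (2 ^ (m + 1)) - 1) * (x ^ (2 ^ (m + 1)) + 1) := by
      rw [show (2:ℕ) ^ (m+2) = 2^(m+1) * 2 by ring, pow_mul]
      ring
    rw [show m + 1 + 3 = (m + 3) + 1 by ring, pow_succ, hsq]
    exact mul_dvd_mul ih ⟨u + 1, by rw [hu]; ring⟩

lemma aux_two_pow_dvd {k p : ℕ} (hk : 3 ≤ k) (hp : Odd p) :
    2 ^ k ∣ p ^ (2 ^ (k - 2)) - 1 := by
  have hp1 : 1 ≤ p := hp.pos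
  have hint := aux_odd_pow_int (k - 3) (p : ℤ) (Int.odd_coe_nat p |>.mpr hp)
  rw [show k - 3 + 3 = k by omega, show k - 3 + 1 = k - 2 by omega] at hint
  have h1 : 1 ≤ p ^ 2 ^ (k - 2) := Nat.one_le_pow _ _ (by omega)
  apply Int.ofNat_dvd.mp
  push_cast [Nat.cast_sub h1]
  exact hint

lemma aux_unit_pow_eq_one {d : ℕ} [NeZero d] {p : ℕ} (hc : p.Coprime d) (hp1 : 1 ≤ p)
    (j : ℕ) : (ZMod.unitOfCoprime p hc) ^ j = 1 ↔ d ∣ p ^ j - 1 := by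
  have h1 : 1 ≤ p ^ j := Nat.one_le_pow _ _ (by omega)
  rw [← ZMod.natCast_eq_zero_iff, Nat.cast_sub h1, Nat.cast_pow, Nat.cast_one,
    sub_eq_zero, Units.ext_iff, Units.val_pow_eq_pow_val, ZMod.coe_unitOfCoprime,
    Units.val_one]

lemma aux_pow_p_eq_self {G : Type*} [Group G] (g : G) (hord : 0 < orderOf g)
    {p : ℕ} (hc : p.Coprime (orderOf g)) (hp1 : 1 ≤ p) (j : ℕ) :
    g ^ (p ^ j) = g ↔ orderOf g ∣ p ^ j - 1 := by
  have h1 : 1 ≤ p ^ j := Nat.one_le_pow _ _ (by omega)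
  conv_lhs => rw [show p ^ j = (p ^ j - 1) + 1 by omega, pow_add, pow_one]
  rw [mul_eq_right, ← orderOf_dvd_iff_pow_eq_one]

lemma aux_contrib_large {k o : ℕ} (hk : 3 ≤ k) (ho : o ∣ 2 ^ (k - 2)) :
    ((-1 : ℤˣ) ^ (o - 1)) ^ (Nat.totient (2 ^ k) / o) = 1 := by
  obtain ⟨j, hj, rfl⟩ := (Nat.dvd_prime_pow Nat.prime_two).1 ho
  have htot : Nat.totient (2 ^ k) = 2 ^ (k - 1) := by
    rw [show k = (k-1) + 1 by omega, Nat.totient_prime_pow Nat.prime_two (by omega)]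
    simp
  rw [htot, Nat.pow_div (by omega) (by norm_num),
    show k - 1 - j = (k - 2 - j) + 1 by omega, pow_succ, pow_mul]
  exact Int.units_sq _

lemma aux_isCyclic_zpowers {G : Type*} [Group G] (a : G) :
    IsCyclic (Subgroup.zpowers a) := by
  refine ⟨⟨⟨a, Subgroup.mem_zpowers a⟩, ?_⟩⟩
  rintro ⟨x, hx⟩
  obtain ⟨k, rfl⟩ := hx
  exact ⟨k, Subtype.ext (by simp)⟩

lemma aux_card_fiber {G : Type*} [Group G] [Fintype G] [DecidableEq G] (g0 : G) :
    Nat.card {g : G // Subgroup.zpowers g = Subgroup.zpowers g0}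
      = Nat.totient (orderOf g0) := by
  classical
  set H := Subgroup.zpowers g0 with hH
  have e : {g : G // Subgroup.zpowers g = H} ≃ {x : H // orderOf x = orderOf g0} := by
    refine
      { toFun := fun g => ⟨⟨g.1, g.2.le (Subgroup.mem_zpowers g.1)⟩, ?_⟩
        invFun := fun x => ⟨x.1.1, ?_⟩
        left_inv := fun g => Subtype.ext rfl
        right_inv := fun x => Subtype.ext (Subtype.ext rfl) }
    · rw [Subgroup.orderOf_mk]
      have : Nat.card (Subgroup.zpowers g.1) = Nat.card H := by rw [g.2]
      rw [Nat.card_zpowers, Nat.card_zpowers] at this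
      exact this
    · have hle : Subgroup.zpowers (x.1 : G) ≤ H := Subgroup.zpowers_le.2 x.1.2
      refine Subgroup.eq_of_le_of_card_ge hle ?_
      have hcc : Nat.card (Subgroup.zpowers (x.1 : G)) = Nat.card H := by
        rw [Nat.card_zpowers, Subgroup.orderOf_coe, x.2, hH, Nat.card_zpowers]
      exact le_of_eq hcc.symm
  rw [Nat.card_congr e]
  have : Fintype H := Fintype.ofFinite _
  haveI : IsCyclic H := aux_isCyclic_zpowers g0
  have hcard : Fintype.card H = orderOf g0 := by
    rw [← Nat.card_eq_fintype_card, Nat.card_zpowers]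
  rw [Nat.card_eq_fintype_card, Fintype.card_subtype]
  rw [← hcard]
  exact IsCyclic.card_orderOf_eq_totient (by rw [hcard])

open scoped Classical in
lemma aux_fiber_sign {G : Type*} [Group G] [Fintype G] [DecidableEq G]
    (n p : ℕ) (hcard : Fintype.card G = 2 ^ n) (hp2 : p.Prime) (hp : p ≠ 2)
    (σ : Equiv.Perm G) (hσ : ∀ g : G, σ g = g ^ p) (H : Subgroup G)
    (hpf : ∀ a : G, Subgroup.zpowers (σ a) = H ↔ Subgroup.zpowers a = H) :
    Perm.sign (σ.subtypePerm (p := fun g => Subgroup.zpowers g = H) hpf)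
      = if p % 4 = 3 ∧ ∃ g : G, Subgroup.zpowers g = H ∧ orderOf g = 4 then -1 else 1 := by
  have hpodd : Odd p := hp2.odd_of_ne_two hp
  have hp1 : 1 ≤ p := hp2.pos
  have hcop : ∀ g : G, p.Coprime (orderOf g) := fun g => by
    have hdvd : orderOf g ∣ 2 ^ n := hcard ▸ orderOf_dvd_card
    obtain ⟨k, -, hk⟩ := (Nat.dvd_prime_pow Nat.prime_two).1 hdvd
    rw [hk]
    exact Nat.Coprime.pow_right _ ((Nat.coprime_primes hp2 Nat.prime_two).2 hp)
  by_cases hne : ∃ g : G, Subgroup.zpowers g = H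
  swap
  · rw [if_neg (fun h => hne ⟨h.2.choose, h.2.choose_spec.1⟩)]
    haveI : IsEmpty {g : G // Subgroup.zpowers g = H} := ⟨fun x => hne ⟨x.1, x.2⟩⟩
    have h1 : σ.subtypePerm (p := fun g => Subgroup.zpowers g = H) hpf = 1 := Equiv.ext fun x => (IsEmpty.false x).elim
    rw [h1, map_one]
  · obtain ⟨g0, hg0⟩ := hne
    subst hg0
    have hdpos : 0 < orderOf g0 := orderOf_pos g0
    haveI : NeZero (orderOf g0) := ⟨hdpos.ne'⟩
    have hdd : orderOf g0 ∣ 2 ^ n := hcard ▸ orderOf_dvd_card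
    obtain ⟨k, hkn, hdk⟩ := (Nat.dvd_prime_pow Nat.prime_two).1 hdd
    have hcop0 : p.Coprime (orderOf g0) := hcop g0
    set u : (ZMod (orderOf g0))ˣ := ZMod.unitOfCoprime p hcop0 with hu
    have ho : 0 < orderOf u := orderOf_pos u
    have hford : ∀ x : {g : G // Subgroup.zpowers g = Subgroup.zpowers g0},
        orderOf (x : G) = orderOf g0 := by
      intro x
      have h2 : Nat.card (Subgroup.zpowers (x : G)) = Nat.card (Subgroup.zpowers g0) := by
        rw [x.2]
      rwa [Nat.card_zpowers, Nat.card_zpowers] at h2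
    set τ := σ.subtypePerm (p := fun g => Subgroup.zpowers g = Subgroup.zpowers g0) hpf with hτ
    have hpowj : ∀ (j : ℕ) (x : {g : G // Subgroup.zpowers g = Subgroup.zpowers g0}),
        ((τ ^ j) x : G) = (x : G) ^ (p ^ j) := by
      intro j
      induction j with
      | zero => intro x; simp
      | succ j ih =>
        intro x
        rw [pow_succ, Equiv.Perm.mul_apply, ih (τ x)]
        have hτx : ((τ x : G)) = (x : G) ^ p := by
          rw [hτ]
          simp only [Equiv.Perm.subtypePerm_apply]
          rw [hσ]
        rw [hτx, ← pow_mul, ← pow_succ']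
    have hiff : ∀ (x : {g : G // Subgroup.zpowers g = Subgroup.zpowers g0}) (j : ℕ),
        (τ ^ j) x = x ↔ orderOf u ∣ j := by
      intro x j
      rw [Subtype.ext_iff, hpowj j x,
        aux_pow_p_eq_self (x : G) (by rw [hford x]; exact hdpos) (hcop _) hp1 j,
        hford x, ← aux_unit_pow_eq_one hcop0 hp1 j, ← hu, orderOf_dvd_iff_pow_eq_one]
    have hsign := aux_sign_of_uniform_period τ (orderOf u) ho hiff
    have hcardf : Fintype.card {g : G // Subgroup.zpowers g = Subgroup.zpowers g0}
        = Nat.totient (orderOf g0) := by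
      rw [← Nat.card_eq_fintype_card, aux_card_fiber g0]
    rw [hsign, hcardf]
    have hex4 : (∃ g : G, Subgroup.zpowers g = Subgroup.zpowers g0 ∧ orderOf g = 4)
        ↔ orderOf g0 = 4 := by
      constructor
      · rintro ⟨g, hg, h4⟩
        rw [← h4]
        exact (hford ⟨g, hg⟩).symm
      · intro h4
        exact ⟨g0, rfl, h4⟩
    by_cases hk3 : 3 ≤ k
    · have hodvd : orderOf u ∣ 2 ^ (k - 2) := by
        apply orderOf_dvd_of_pow_eq_one
        rw [hu, aux_unit_pow_eq_one hcop0 hp1, hdk]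
        exact aux_two_pow_dvd hk3 hpodd
      rw [if_neg]
      · have htot : (orderOf g0).totient = (2 ^ k).totient := by rw [hdk]
        rw [htot]
        exact aux_contrib_large hk3 hodvd
      · rintro ⟨-, hcond⟩
        have h4 := hex4.1 hcond
        rw [hdk] at h4
        have : k = 2 := by
          have := Nat.pow_right_injective (le_refl 2) (h4.trans (by norm_num : (4:ℕ) = 2^2))
          omega
        omega
    · -- k ≤ 2
      have hmod : p % 4 = 1 ∨ p % 4 = 3 := by
        have := Nat.odd_iff.1 hpodd
        omega
      rcases Nat.lt_or_ge k 2 with hk2 | hk2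
      · -- orderOf g0 ∣ 2, so u = 1
        have ho1 : orderOf u = 1 := by
          apply orderOf_eq_one_iff.2
          have hdvd1 : orderOf g0 ∣ p ^ 1 - 1 := by
            rw [hdk, pow_one]
            have hpm : p % 2 = 1 := Nat.odd_iff.1 hpodd
            interval_cases k
            · simpa using one_dvd _
            · omega
          have h11 := (aux_unit_pow_eq_one hcop0 hp1 1).2 hdvd1
          rwa [pow_one] at h11
        rw [ho1, if_neg]
        · simp
        · rintro ⟨-, hcond⟩
          have h4 := hex4.1 hcond
          rw [hdk] at h4
          interval_cases k <;> omega
      · -- k = 2, orderOf g0 = 4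
        have hk2' : k = 2 := by omega
        subst hk2'
        have hd4 : orderOf g0 = 4 := by rw [hdk]; norm_num
        rcases hmod with hm1 | hm3
        · have ho1 : orderOf u = 1 := by
            apply orderOf_eq_one_iff.2
            rw [← pow_one u, hu, aux_unit_pow_eq_one hcop0 hp1, hd4, pow_one]
            omega
          rw [ho1, if_neg]
          · simp
          · rintro ⟨hc1, -⟩
            omega
        · haveI : Fact (Nat.Prime 2) := ⟨Nat.prime_two⟩
          have hu2 : u ^ 2 = 1 := by
            rw [hu, aux_unit_pow_eq_one hcop0 hp1, hd4]
            obtain ⟨t, ht⟩ : ∃ t, p = 4 * t + 3 := ⟨p / 4, by omega⟩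
            have hps : p ^ 2 = 4 * (4 * t ^ 2 + 6 * t + 2) + 1 := by subst ht; ring
            omega
          have hu1 : u ≠ 1 := by
            intro h1
            have := (aux_unit_pow_eq_one hcop0 hp1 1).1 (by rw [pow_one, ← hu, h1])
            rw [hd4, pow_one] at this
            omega
          have ho2 : orderOf u = 2 := orderOf_eq_prime hu2 hu1
          rw [ho2, if_pos ⟨hm3, hex4.2 hd4⟩, hd4,
            show Nat.totient 4 = 2 by decide]
          norm_num

/-- For a finite 2-group `G` of order `2 ^ n` with `n ≥ 3` and an odd prime `p`, the sign
of the permutation `g ↦ g ^ p` of `G` equals `(-1/p)^{G(4)/2}`, where `G(4)` is the number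
of elements of order `4`. -/
theorem sign_powMap_two_group (G : Type*) [Group G] [Fintype G] [DecidableEq G]
    (n : ℕ) (hn : 3 ≤ n) (hcard : Fintype.card G = 2 ^ n)
    (p : ℕ) [Fact p.Prime] (hp : p ≠ 2)
    (σ : Equiv.Perm G) (hσ : ∀ g : G, σ g = g ^ p) :
    ((Equiv.Perm.sign σ : ℤˣ) : ℤ) =
      (legendreSym p (-1)) ^ (Nat.card {g : G // orderOf g = 4} / 2) := by
  classical
  have hp2 : p.Prime := Fact.out
  have hpodd : Odd p := hp2.odd_of_ne_two hp
  have hcop : ∀ g : G, p.Coprime (orderOf g) := fun g => by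
    have hdvd : orderOf g ∣ 2 ^ n := hcard ▸ orderOf_dvd_card
    obtain ⟨k, -, hk⟩ := (Nat.dvd_prime_pow Nat.prime_two).1 hdvd
    rw [hk]
    exact Nat.Coprime.pow_right _ ((Nat.coprime_primes hp2 Nat.prime_two).2 hp)
  haveI : Fintype (Subgroup G) := Fintype.ofFinite _
  have hf : ∀ a : G, Subgroup.zpowers (σ a) = Subgroup.zpowers a := by
    intro a
    rw [hσ a]
    have hord : orderOf (a ^ p) = orderOf a := Nat.Coprime.orderOf_pow ((hcop a).symm)
    refine Subgroup.eq_of_le_of_card_ge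
      (Subgroup.zpowers_le.2 (Subgroup.pow_mem _ (Subgroup.mem_zpowers a) p)) ?_
    rw [Nat.card_zpowers, Nat.card_zpowers, hord]
  have key := aux_sign_fiberwise (fun g : G => Subgroup.zpowers g) σ hf
  have hterm : ∀ (H : Subgroup G)
      (hpf : ∀ a : G, Subgroup.zpowers (σ a) = H ↔ Subgroup.zpowers a = H),
      Perm.sign (σ.subtypePerm (p := fun g => Subgroup.zpowers g = H) hpf)
        = if p % 4 = 3 ∧ ∃ g : G, Subgroup.zpowers g = H ∧ orderOf g = 4 then -1 else 1 :=
    fun H hpf => aux_fiber_sign n p hcard hp2 hp σ hσ H hpf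
  rw [key]
  simp only [hterm]
  set S := Finset.univ.filter
    (fun H : Subgroup G => ∃ g : G, Subgroup.zpowers g = H ∧ orderOf g = 4) with hS
  have hG4 : Nat.card {g : G // orderOf g = 4} = 2 * S.card := by
    rw [Nat.card_eq_fintype_card, Fintype.card_subtype]
    rw [Finset.card_eq_sum_card_fiberwise
      (f := fun g : G => Subgroup.zpowers g)
      (t := S)
      (fun x hx => Finset.mem_filter.2
        ⟨Finset.mem_univ _, ⟨x, rfl, (Finset.mem_filter.1 hx).2⟩⟩)]
    have hterm2 : ∀ H ∈ S,
        ((Finset.univ.filter (fun g : G => orderOf g = 4)).filter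
          (fun g => Subgroup.zpowers g = H)).card = 2 := by
      intro H hH
      obtain ⟨g1, hg1, h41⟩ := (Finset.mem_filter.1 hH).2
      subst hg1
      have hfe : ((Finset.univ.filter (fun g : G => orderOf g = 4)).filter
          (fun g => Subgroup.zpowers g = Subgroup.zpowers g1))
          = Finset.univ.filter (fun g : G => Subgroup.zpowers g = Subgroup.zpowers g1) := by
        ext g
        simp only [Finset.mem_filter, Finset.mem_univ, true_and]
        constructor
        · exact fun h => h.2
        · intro h
          refine ⟨?_, h⟩
          have h2 : Nat.card (Subgroup.zpowers g) = Nat.card (Subgroup.zpowers g1) := by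
            rw [h]
          rw [Nat.card_zpowers, Nat.card_zpowers] at h2
          rw [h2, h41]
      rw [hfe]
      have hcf := aux_card_fiber g1
      rw [Nat.card_eq_fintype_card, Fintype.card_subtype] at hcf
      rw [hcf, h41]
      decide
    rw [Finset.sum_congr rfl hterm2, Finset.sum_const, smul_eq_mul, mul_comm]
  have hmod : p % 4 = 1 ∨ p % 4 = 3 := by
    have := Nat.odd_iff.1 hpodd
    omega
  rcases hmod with hm | hm
  · have hL : legendreSym p (-1) = 1 := by
      rw [legendreSym.at_neg_one hp, ZMod.χ₄_nat_one_mod_four hm]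
    rw [hL, one_pow]
    have hall : ∀ H : Subgroup G,
        (if p % 4 = 3 ∧ ∃ g : G, Subgroup.zpowers g = H ∧ orderOf g = 4
          then (-1 : ℤˣ) else 1) = 1 :=
      fun H => if_neg (fun hc => absurd hc.1 (by omega))
    rw [Finset.prod_congr rfl (fun H _ => hall H), Finset.prod_const_one]
    simp
  · have hL : legendreSym p (-1) = -1 := by
      rw [legendreSym.at_neg_one hp, ZMod.χ₄_nat_three_mod_four hm]
    rw [hL]
    have hsimp : ∀ H : Subgroup G,
        (if p % 4 = 3 ∧ ∃ g : G, Subgroup.zpowers g = H ∧ orderOf g = 4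
          then (-1 : ℤˣ) else 1)
        = if (∃ g : G, Subgroup.zpowers g = H ∧ orderOf g = 4) then (-1 : ℤˣ) else 1 :=
      fun H => by rw [if_congr (and_iff_right hm) rfl rfl]
    rw [Finset.prod_congr rfl (fun H _ => hsimp H), Finset.prod_ite, Finset.prod_const,
      Finset.prod_const_one, mul_one]
    rw [hG4, show 2 * S.card / 2 = S.card from by omega, ← hS]
    simp [Units.val_pow_eq_pow_val]
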